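/- Let G be a generator with dimensions w_G, h_G and stages (X_i)_{i≥1}. Then for every i ≥ 1, X_{i+1} ∩ ({0,…,w_G^i−1} × {0,…,h_G^i−1}) = X_i; that is, the portion of stage i+1 lying in the bounding box of stage i is exactly stage i. -/

import Mathlib

/-- Two lattice points are adjacent iff they are at Euclidean distance 1
(i.e. they differ by exactly 1 in exactly one coordinate). -/
def adjPt (p q : ℕ × ℕ) : Prop :=
  (p.1 = q.1 ∧ (p.2 + 1 = q.2 ∨ q.2 + 1 = p.2)) ∨
  (p.2 = q.2 ∧ (p.1 + 1 = q.1 ∨ q.1 + 1 = p.1))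

/-- The graph with vertex set `S` and an edge between any two points at
Euclidean distance 1. -/
def gridGraph (S : Set (ℕ × ℕ)) : SimpleGraph S where
  Adj p q := adjPt p.1 q.1
  symm := by
    constructor
    rintro ⟨p, hp⟩ ⟨q, hq⟩ (⟨h1, h2⟩ | ⟨h1, h2⟩)
    · exact Or.inl ⟨h1.symm, h2.symm⟩
    · exact Or.inr ⟨h1.symm, h2.symm⟩
  loopless := by
    constructor
    rintro ⟨p, hp⟩ (⟨_, h | h⟩ | ⟨_, h | h⟩) <;> omega

/-- A set `S ⊆ ℕ²` is connected if its grid graph is connected. -/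
def IsConnectedSet (S : Set (ℕ × ℕ)) : Prop := (gridGraph S).Connected

/-- `wG G = max{x | (x,y) ∈ G} + 1`. -/
noncomputable def wG (G : Set (ℕ × ℕ)) : ℕ := sSup ((fun p => p.1) '' G) + 1

/-- `hG G = max{y | (x,y) ∈ G} + 1`. -/
noncomputable def hG (G : Set (ℕ × ℕ)) : ℕ := sSup ((fun p => p.2) '' G) + 1

/-- The rectangle `{0,…,w−1} × {0,…,h−1}`. -/
def gridBox (w h : ℕ) : Set (ℕ × ℕ) := {p | p.1 < w ∧ p.2 < h}

/-- `G` is a generator of a discrete self-similar fractal. -/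
structure IsGenerator (G : Set (ℕ × ℕ)) : Prop where
  finite : G.Finite
  zero_mem : (0, 0) ∈ G
  connected : IsConnectedSet G
  one_lt_w : 1 < wG G
  one_lt_h : 1 < hG G
  ssubset_box : G ⊂ gridBox (wG G) (hG G)

/-- The stages of the discrete self-similar fractal generated by `G`:
`X_1 = G` and `X_{i+1} = X_i + (wG^i, hG^i)·G`.  (`stage G 0` is unused.) -/
noncomputable def stage (G : Set (ℕ × ℕ)) : ℕ → Set (ℕ × ℕ)
  | 0 => ∅
  | 1 => G
  | (i + 2) => {p | ∃ a ∈ stage G (i + 1), ∃ b ∈ G,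
      p = (a.1 + wG G ^ (i + 1) * b.1, a.2 + hG G ^ (i + 1) * b.2)}

/-- The discrete self-similar fractal `F = ⋃_{i ≥ 1} X_i` generated by `G`. -/
noncomputable def fractal (G : Set (ℕ × ℕ)) : Set (ℕ × ℕ) := ⋃ i : ℕ, stage G (i + 1)

/-- The generator of the Sierpinski triangle: `{(0,0),(1,0),(0,1)}`. -/
def sierpGen : Set (ℕ × ℕ) := {(0, 0), (1, 0), (0, 1)}

lemma stage_subset_box (G : Set (ℕ × ℕ)) (hGen : IsGenerator G) :
    ∀ i : ℕ, stage G (i + 1) ⊆ gridBox (wG G ^ (i + 1)) (hG G ^ (i + 1)) := by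
  have hbox : G ⊆ gridBox (wG G) (hG G) := hGen.ssubset_box.subset
  intro i
  induction i with
  | zero => simpa [stage] using hbox
  | succ j ih =>
    rintro p ⟨a, ha, b, hb, rfl⟩
    have hab := ih ha
    have hbb := hbox hb
    obtain ⟨h1, h2⟩ := hab
    obtain ⟨h3, h4⟩ := hbb
    constructor
    · show a.1 + wG G ^ (j + 1) * b.1 < wG G ^ (j + 2)
      have : wG G ^ (j + 2) = wG G ^ (j + 1) * wG G := by ring
      rw [this]
      have : wG G ^ (j + 1) * b.1 + wG G ^ (j + 1) ≤ wG G ^ (j + 1) * wG G := by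
        have : b.1 + 1 ≤ wG G := h3
        calc wG G ^ (j + 1) * b.1 + wG G ^ (j + 1) = wG G ^ (j + 1) * (b.1 + 1) := by ring
          _ ≤ wG G ^ (j + 1) * wG G := Nat.mul_le_mul_left _ this
      omega
    · show a.2 + hG G ^ (j + 1) * b.2 < hG G ^ (j + 2)
      have : hG G ^ (j + 2) = hG G ^ (j + 1) * hG G := by ring
      rw [this]
      have : hG G ^ (j + 1) * b.2 + hG G ^ (j + 1) ≤ hG G ^ (j + 1) * hG G := by
        have : b.2 + 1 ≤ hG G := h4
        calc hG G ^ (j + 1) * b.2 + hG G ^ (j + 1) = hG G ^ (j + 1) * (b.2 + 1) := by ring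
          _ ≤ hG G ^ (j + 1) * hG G := Nat.mul_le_mul_left _ this
      omega

/-- for every `i ≥ 1`, the portion of stage `i+1` lying in the
bounding box of stage `i` is exactly stage `i`. -/
theorem stage_succ_inter_box (G : Set (ℕ × ℕ)) (hGen : IsGenerator G) :
    ∀ i : ℕ, 1 ≤ i →
      stage G (i + 1) ∩ gridBox (wG G ^ i) (hG G ^ i) = stage G i := by
  intro i hi
  obtain ⟨j, rfl⟩ := Nat.exists_eq_succ_of_ne_zero (by omega : i ≠ 0)
  simp only [Nat.succ_eq_add_one]
  ext p
  constructor
  · rintro ⟨⟨a, ha, b, hb, rfl⟩, hp1, hp2⟩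
    have hwpos : 0 < wG G ^ (j + 1) := Nat.pow_pos (by have := hGen.one_lt_w; omega)
    have hhpos : 0 < hG G ^ (j + 1) := Nat.pow_pos (by have := hGen.one_lt_h; omega)
    have hb1 : b.1 = 0 := by
      by_contra h
      have : 1 ≤ b.1 := Nat.one_le_iff_ne_zero.mpr h
      have : wG G ^ (j + 1) ≤ wG G ^ (j + 1) * b.1 := Nat.le_mul_of_pos_right _ (by omega)
      simp only [gridBox] at hp1
      omega
    have hb2 : b.2 = 0 := by
      by_contra h
      have : 1 ≤ b.2 := Nat.one_le_iff_ne_zero.mpr h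
      have : hG G ^ (j + 1) ≤ hG G ^ (j + 1) * b.2 := Nat.le_mul_of_pos_right _ (by omega)
      simp only [gridBox] at hp2
      omega
    simpa [hb1, hb2] using ha
  · intro hp
    refine ⟨⟨p, hp, (0, 0), hGen.zero_mem, by simp⟩, stage_subset_box G hGen j hp⟩
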